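/- Let L > 0, let λ be the normalized Lebesgue measure on [0,L], and let μ be the probability measure on [0,π] with μ(B) = (1/2)∫_B sin(θ) dθ. Then λ × μ is invariant for the random map T̄(s,θ) = (s, T_i(θ)) applied with probability p_i(θ): for every Borel set E ⊆ [0,L] × [0,π], (λ×μ)(E) = Σ_{i=1}^4 ∬ 1_E(s, T_i(θ)) p_i(θ) dλ(s) dμ(θ). -/

import Mathlib

open Real MeasureTheory Set Filter Topology
open scoped ENNReal NNReal

noncomputable section

namespace RandomBilliard

/-- The four maps `T_1, …, T_4` of the Feres random map
(index `i : Fin 4` stands for `T_{i+1}`). -/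
def T (α : ℝ) : Fin 4 → ℝ → ℝ
  | 0 => fun θ => θ + 2 * α
  | 1 => fun θ => -θ + 2 * π - 4 * α
  | 2 => fun θ => θ - 2 * α
  | 3 => fun θ => -θ + 4 * α

/-- `u_a(θ) = (1/2)(1 + tan a / tan θ)`. -/
def u (a θ : ℝ) : ℝ := 1 / 2 * (1 + Real.tan a / Real.tan θ)

/-- The probabilities `p_1, …, p_4` of the Feres random map
(index `i : Fin 4` stands for `p_{i+1}`). -/
def p (α : ℝ) : Fin 4 → ℝ → ℝ
  | 0 => fun θ =>
      if θ < α then 1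
      else if θ < π - 3 * α then u α θ
      else if θ < π - 2 * α then 2 * Real.cos (2 * α) * u (2 * α) θ
      else 0
  | 1 => fun θ =>
      if θ < π - 3 * α then 0
      else if θ < π - 2 * α then u α θ - 2 * Real.cos (2 * α) * u (2 * α) θ
      else if θ < π - α then u α θ
      else 0
  | 2 => fun θ =>
      if θ < 2 * α then 0
      else if θ < 3 * α then 2 * Real.cos (2 * α) * u (2 * α) (-θ)
      else if θ < π - α then u α (-θ)
      else 1
  | 3 => fun θ =>
      if θ < α then 0
      else if θ < 2 * α then u α (-θ)
      else if θ < 3 * α then u α (-θ) - 2 * Real.cos (2 * α) * u (2 * α) (-θ)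
      else 0

/-- `iterT α x k θ = T_x^{(k)}(θ) = T_{x_k} ∘ ⋯ ∘ T_{x_1}(θ)`
(the term `x j : Fin 4` stands for the symbol `x_{j+1}`). -/
def iterT (α : ℝ) (x : ℕ → Fin 4) : ℕ → ℝ → ℝ
  | 0 => fun θ => θ
  | k + 1 => fun θ => T α (x k) (iterT α x k θ)

/-- `Σ_θ`: the admissible symbol sequences for `θ`, i.e. those whose every finite
prefix has positive probability. -/
def SigmaTheta (α θ : ℝ) : Set (ℕ → Fin 4) :=
  {x | ∀ k : ℕ, 0 < ∏ j ∈ Finset.range k, p α (x j) (iterT α x j θ)}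

/-- `C(θ)`: all possible future images of `θ` under the Feres random map. -/
def Cset (α θ : ℝ) : Set ℝ :=
  {θ' | θ' ∈ Set.Ioo 0 π ∧
    ∃ (x : ℕ → Fin 4) (k : ℕ), x ∈ SigmaTheta α θ ∧ iterT α x k θ = θ'}

/-- The probability measure `μ(A) = (1/2) ∫_A sin θ dθ` on `[0, π]`. -/
def mu0 : Measure ℝ :=
  (volume.restrict (Set.Icc 0 π)).withDensity fun θ => ENNReal.ofReal (1 / 2 * Real.sin θ)

/-- One step of the evolution of a measure under the Feres random map:
`(stepMeasure α ν)(A) = ∫ K(θ, A) dν(θ)`, where `K(θ, A) = Σ_i p_i(θ) 1_A(T_i θ)`. -/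
def stepMeasure (α : ℝ) (ν : Measure ℝ) : Measure ℝ :=
  ∑ i : Fin 4, Measure.map (T α i) (ν.withDensity fun θ => ENNReal.ofReal (p α i θ))

/-- One step of the evolution of a measure under the random billiard map in the circle
`F̄(s, θ) = (s + 2 T_i(θ) mod 2π, T_i(θ))` with probability `p_i(θ)`. -/
def circleStep (α : ℝ) (ν : Measure (ℝ × ℝ)) : Measure (ℝ × ℝ) :=
  ∑ i : Fin 4,
    Measure.map
      (fun q : ℝ × ℝ => (toIcoMod Real.two_pi_pos 0 (q.1 + 2 * T α i q.2), T α i q.2))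
      (ν.withDensity fun q => ENNReal.ofReal (p α i q.2))

/-- The transition kernel `K(θ', ·) = Σ_i p_i(θ') δ_{T_i(θ')}` of the Feres random map. -/
def feresKernel (α : ℝ) (t : ℝ) : Measure ℝ :=
  ∑ i : Fin 4, ENNReal.ofReal (p α i t) • Measure.dirac (T α i t)

/-- `k`-step iterates of a transition kernel. -/
def kerIterate (κ : ℝ → Measure ℝ) : ℕ → ℝ → Measure ℝ
  | 0 => fun t => Measure.dirac t
  | k + 1 => fun t => (κ t).bind (kerIterate κ k)

/-- The probability that a Markov chain with kernel `κ` started at `t` satisfies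
`θ_0 ∈ B 0, …, θ_n ∈ B n`. -/
def cylProb (κ : ℝ → Measure ℝ) : ℕ → (ℕ → Set ℝ) → ℝ → ℝ≥0∞
  | 0 => fun B t => Set.indicator (B 0) (fun _ => (1 : ℝ≥0∞)) t
  | n + 1 => fun B t =>
      Set.indicator (B 0)
        (fun _ => ∫⁻ t', cylProb κ n (fun k => B (k + 1)) t' ∂(κ t)) t

/-- `ν` is the Markov path measure on `ℕ → ℝ` (given by the Ionescu–Tulcea construction)
with initial distribution `ρ` and transition kernel `κ`, characterized by its values
on cylinder sets. -/
def IsMarkovPathMeasure (κ : ℝ → Measure ℝ) (ρ : Measure ℝ) (ν : Measure (ℕ → ℝ)) : Prop :=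
  ∀ (n : ℕ) (B : ℕ → Set ℝ), (∀ k, MeasurableSet (B k)) →
    ν {ω | ∀ k ≤ n, ω k ∈ B k} = ∫⁻ t, cylProb κ n B t ∂ρ

/-- The shift map on sequences. -/
def shift : (ℕ → ℝ) → ℕ → ℝ := fun ω n => ω (n + 1)

/-- Aperiodicity of the Markov chain with kernel `κ` on the state space `S`:
for every state, every common divisor of the return times having positive
probability equals `1` (i.e. every state has period 1). -/
def AperiodicChain (κ : ℝ → Measure ℝ) (S : Set ℝ) : Prop :=
  ∀ t ∈ S, ∀ d : ℕ, (∀ k : ℕ, 1 ≤ k → 0 < kerIterate κ k t {t} → d ∣ k) → d = 1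

end RandomBilliard

open RandomBilliard


namespace RandomBilliard

/-! ### Auxiliary development -/

lemma cos_ne_zero_of_Ioo' {x : ℝ} (hx : x ∈ Set.Ioo 0 π) (hne : x ≠ π/2) :
    Real.cos x ≠ 0 := by
  intro h
  rcases Real.cos_eq_zero_iff.mp h with ⟨k, hk⟩
  have hp := Real.pi_pos
  have h0 : (0:ℝ) < x := hx.1
  have h1 : x < π := hx.2
  have h2 : (0:ℝ) < 2*(k:ℝ)+1 := by nlinarith
  have h3 : (2*(k:ℝ)+1) < 2 := by nlinarith
  have h4 : (-1:ℤ) < k := by exact_mod_cast (by linarith : (-1:ℝ) < (k:ℝ))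
  have h5 : (k:ℤ) < 1 := by exact_mod_cast (by linarith : ((k:ℝ)) < 1)
  have : k = 0 := by omega
  subst this
  apply hne
  rw [hk]; ring

lemma u_mul_sin {a x : ℝ} (ha : Real.cos a ≠ 0) (hx : x ∈ Set.Ioo 0 π) :
    u a x * Real.sin x = Real.sin (x + a) / (2 * Real.cos a) := by
  rcases eq_or_ne x (π/2) with rfl | hne
  · simp [u, Real.tan_pi_div_two, Real.sin_pi_div_two, Real.sin_add]
    field_simp
  · have hcx := cos_ne_zero_of_Ioo' hx hne
    have hsx : Real.sin x ≠ 0 := (Real.sin_pos_of_pos_of_lt_pi hx.1 hx.2).ne'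
    rw [u, Real.tan_eq_sin_div_cos, Real.tan_eq_sin_div_cos, Real.sin_add]
    field_simp

lemma u_neg_mul_sin {a x : ℝ} (ha : Real.cos a ≠ 0) (hx : x ∈ Set.Ioo 0 π) :
    u a (-x) * Real.sin x = Real.sin (x - a) / (2 * Real.cos a) := by
  rcases eq_or_ne x (π/2) with rfl | hne
  · simp [u, Real.tan_pi_div_two, Real.sin_pi_div_two, Real.sin_sub]
    field_simp
  · have hcx := cos_ne_zero_of_Ioo' hx hne
    have hsx : Real.sin x ≠ 0 := (Real.sin_pos_of_pos_of_lt_pi hx.1 hx.2).ne'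
    rw [u, Real.tan_neg, Real.tan_eq_sin_div_cos, Real.tan_eq_sin_div_cos, Real.sin_sub]
    field_simp
    ring

/-- The inverse maps of the four maps `T_i`. -/
def gm (α : ℝ) : Fin 4 → ℝ → ℝ
  | 0 => fun x => x - 2*α
  | 1 => fun x => 2*π - 4*α - x
  | 2 => fun x => x + 2*α
  | 3 => fun x => 4*α - x

lemma T_gm (α : ℝ) (i : Fin 4) (x : ℝ) : T α i (gm α i x) = x := by
  fin_cases i <;> simp only [T, gm] <;> ring

/-- The real-valued summand after the change of variables. -/
def q (α : ℝ) (i : Fin 4) (x : ℝ) : ℝ :=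
  (Set.Icc 0 π).indicator (fun t => p α i t * (1/2 * Real.sin t)) (gm α i x)

lemma q_of_mem {α x : ℝ} {i : Fin 4} (h : gm α i x ∈ Set.Icc 0 π) :
    q α i x = p α i (gm α i x) * (1/2 * Real.sin (gm α i x)) :=
  Set.indicator_of_mem h _

lemma q_of_not_mem {α x : ℝ} {i : Fin 4} (h : gm α i x ∉ Set.Icc 0 π) : q α i x = 0 :=
  Set.indicator_of_notMem h _

lemma q_of_p_zero {α x : ℝ} {i : Fin 4} (h : p α i (gm α i x) = 0) : q α i x = 0 := by
  unfold q
  exact Set.indicator_apply_eq_zero.mpr (fun _ => by rw [h]; ring)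

section qvals

variable {α x : ℝ}

lemma cos_alpha_pos (ha0 : 0 < α) (ha6 : 6*α < π) : 0 < Real.cos α := by
  have hπ := Real.pi_pos
  exact Real.cos_pos_of_mem_Ioo ⟨by linarith, by linarith⟩

lemma cos_two_alpha_pos (ha0 : 0 < α) (ha6 : 6*α < π) : 0 < Real.cos (2*α) := by
  have hπ := Real.pi_pos
  exact Real.cos_pos_of_mem_Ioo ⟨by linarith, by linarith⟩

lemma q0_notmem (ha0 : 0 < α) (h : x < 2*α) : q α 0 x = 0 := by
  apply q_of_not_mem
  intro hm
  have h1 : (0:ℝ) ≤ x - 2*α := hm.1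
  linarith

lemma q0_one (ha0 : 0 < α) (ha6 : 6*α < π) (h1 : 2*α < x) (h2 : x < 3*α) :
    q α 0 x = 1/2 * Real.sin (x - 2*α) := by
  have hπ := Real.pi_pos
  rw [q_of_mem (by constructor <;> (show _ ≤ _) <;> simp only [gm] <;> linarith)]
  have hp : p α 0 (gm α 0 x) = 1 := by
    dsimp only [p, gm]
    rw [if_pos (by linarith)]
  rw [hp]; simp [gm]

lemma q0_u (ha0 : 0 < α) (ha6 : 6*α < π) (h1 : 3*α < x) (h2 : x < π - α) :
    q α 0 x = Real.sin (x - α) / (4 * Real.cos α) := by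
  have hπ := Real.pi_pos
  have hca := cos_alpha_pos ha0 ha6
  rw [q_of_mem (by constructor <;> (show _ ≤ _) <;> simp only [gm] <;> linarith)]
  have hp : p α 0 (gm α 0 x) = u α (gm α 0 x) := by
    dsimp only [p, gm]
    rw [if_neg (by linarith), if_pos (by linarith)]
  rw [hp]; simp only [gm]
  have hu := u_mul_sin (a := α) (x := x - 2*α) hca.ne' ⟨by linarith, by linarith⟩
  have : u α (x - 2*α) * (1/2 * Real.sin (x - 2*α)) = 1/2 * (u α (x - 2*α) * Real.sin (x - 2*α)) := by ring
  rw [this, hu, show x - 2*α + α = x - α by ring]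
  field_simp [hca.ne']
  ring

lemma q0_c2 (ha0 : 0 < α) (ha6 : 6*α < π) (h1 : π - α < x) (h2 : x < π) :
    q α 0 x = 1/2 * Real.sin x := by
  have hπ := Real.pi_pos
  have hc2 := cos_two_alpha_pos ha0 ha6
  rw [q_of_mem (by constructor <;> (show _ ≤ _) <;> simp only [gm] <;> linarith)]
  have hp : p α 0 (gm α 0 x) = 2 * Real.cos (2*α) * u (2*α) (gm α 0 x) := by
    dsimp only [p, gm]
    rw [if_neg (by linarith), if_neg (by linarith), if_pos (by linarith)]
  rw [hp]; simp only [gm]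
  have hu := u_mul_sin (a := 2*α) (x := x - 2*α) hc2.ne' ⟨by linarith, by linarith⟩
  have : 2 * Real.cos (2*α) * u (2*α) (x - 2*α) * (1/2 * Real.sin (x - 2*α))
      = Real.cos (2*α) * (u (2*α) (x - 2*α) * Real.sin (x - 2*α)) := by ring
  rw [this, hu, show x - 2*α + 2*α = x by ring]
  field_simp [hc2.ne']

lemma q1_zero_lt (ha0 : 0 < α) (ha6 : 6*α < π) (h : x < π - 3*α) : q α 1 x = 0 := by
  apply q_of_p_zero
  dsimp only [p, gm]
  rw [if_neg (by linarith), if_neg (by linarith), if_neg (by linarith)]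

lemma q1_zero_gt (ha0 : 0 < α) (ha6 : 6*α < π) (h : π - α < x) : q α 1 x = 0 := by
  apply q_of_p_zero
  dsimp only [p, gm]
  rw [if_pos (by linarith)]

lemma q1_u (ha0 : 0 < α) (ha6 : 6*α < π) (h1 : π - 3*α < x) (h2 : x < π - 2*α) :
    q α 1 x = -Real.sin (x + 3*α) / (4 * Real.cos α) := by
  have hπ := Real.pi_pos
  have hca := cos_alpha_pos ha0 ha6
  rw [q_of_mem (by constructor <;> (show _ ≤ _) <;> simp only [gm] <;> linarith)]
  have hp : p α 1 (gm α 1 x) = u α (gm α 1 x) := by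
    dsimp only [p, gm]
    rw [if_neg (by linarith), if_neg (by linarith), if_pos (by linarith)]
  rw [hp]; simp only [gm]
  have hu := u_mul_sin (a := α) (x := 2*π - 4*α - x) hca.ne' ⟨by linarith, by linarith⟩
  have : u α (2*π - 4*α - x) * (1/2 * Real.sin (2*π - 4*α - x))
      = 1/2 * (u α (2*π - 4*α - x) * Real.sin (2*π - 4*α - x)) := by ring
  rw [this, hu, show 2*π - 4*α - x + α = 2*π - (x + 3*α) by ring, Real.sin_two_pi_sub]
  field_simp [hca.ne']
  ring

lemma q1_mid (ha0 : 0 < α) (ha6 : 6*α < π) (h1 : π - 2*α < x) (h2 : x < π - α) :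
    q α 1 x = Real.sin (x + α) / (4 * Real.cos α) := by
  have hπ := Real.pi_pos
  have hca := cos_alpha_pos ha0 ha6
  have hc2 := cos_two_alpha_pos ha0 ha6
  rw [q_of_mem (by constructor <;> (show _ ≤ _) <;> simp only [gm] <;> linarith)]
  have hp : p α 1 (gm α 1 x)
      = u α (gm α 1 x) - 2 * Real.cos (2*α) * u (2*α) (gm α 1 x) := by
    dsimp only [p, gm]
    rw [if_neg (by linarith), if_pos (by linarith)]
  rw [hp]; simp only [gm]
  have hIoo : (2*π - 4*α - x) ∈ Set.Ioo 0 π := ⟨by linarith, by linarith⟩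
  have hu1 := u_mul_sin (a := α) (x := 2*π - 4*α - x) hca.ne' hIoo
  have hu2 := u_mul_sin (a := 2*α) (x := 2*π - 4*α - x) hc2.ne' hIoo
  have : (u α (2*π - 4*α - x) - 2 * Real.cos (2*α) * u (2*α) (2*π - 4*α - x))
        * (1/2 * Real.sin (2*π - 4*α - x))
      = 1/2 * (u α (2*π - 4*α - x) * Real.sin (2*π - 4*α - x))
        - Real.cos (2*α) * (u (2*α) (2*π - 4*α - x) * Real.sin (2*π - 4*α - x)) := by ring
  rw [this, hu1, hu2, show 2*π - 4*α - x + α = 2*π - (x + 3*α) by ring,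
    show 2*π - 4*α - x + 2*α = 2*π - (x + 2*α) by ring,
    Real.sin_two_pi_sub, Real.sin_two_pi_sub]
  -- now: 1/2 * (-sin (x+3α) / (2 cos α)) - cos 2α * (-sin (x+2α) / (2 cos 2α)) = sin (x+α)/(4 cos α)
  have key : -Real.sin (x + 3*α) + 2 * Real.cos α * Real.sin (x + 2*α) = Real.sin (x + α) := by
    simp only [show (3:ℝ)*α = 2*α + α by ring, show x + (2*α + α) = (x + 2*α) + α by ring,
      Real.sin_add, Real.cos_add, Real.sin_two_mul, Real.cos_two_mul']
    linear_combination (Real.sin x * Real.cos α + Real.cos x * Real.sin α) * (Real.sin_sq_add_cos_sq α)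
  calc 1/2 * (-Real.sin (x + 3*α) / (2 * Real.cos α)) - Real.cos (2*α) * (-Real.sin (x + 2*α) / (2 * Real.cos (2*α)))
      = (-Real.sin (x + 3*α) + 2 * Real.cos α * Real.sin (x + 2*α)) / (4 * Real.cos α) := by
        field_simp [hca.ne', hc2.ne']; ring
    _ = Real.sin (x + α) / (4 * Real.cos α) := by rw [key]

lemma q2_c2 (ha0 : 0 < α) (ha6 : 6*α < π) (h1 : 0 < x) (h2 : x < α) :
    q α 2 x = 1/2 * Real.sin x := by
  have hπ := Real.pi_pos
  have hc2 := cos_two_alpha_pos ha0 ha6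
  rw [q_of_mem (by constructor <;> (show _ ≤ _) <;> simp only [gm] <;> linarith)]
  have hp : p α 2 (gm α 2 x) = 2 * Real.cos (2*α) * u (2*α) (-(gm α 2 x)) := by
    dsimp only [p, gm]
    rw [if_neg (by linarith), if_pos (by linarith)]
  rw [hp]; simp only [gm]
  have hu := u_neg_mul_sin (a := 2*α) (x := x + 2*α) hc2.ne' ⟨by linarith, by linarith⟩
  have : 2 * Real.cos (2*α) * u (2*α) (-(x + 2*α)) * (1/2 * Real.sin (x + 2*α))
      = Real.cos (2*α) * (u (2*α) (-(x + 2*α)) * Real.sin (x + 2*α)) := by ring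
  rw [this, hu, show x + 2*α - 2*α = x by ring]
  field_simp [hc2.ne']

lemma q2_u (ha0 : 0 < α) (ha6 : 6*α < π) (h1 : α < x) (h2 : x < π - 3*α) :
    q α 2 x = Real.sin (x + α) / (4 * Real.cos α) := by
  have hπ := Real.pi_pos
  have hca := cos_alpha_pos ha0 ha6
  rw [q_of_mem (by constructor <;> (show _ ≤ _) <;> simp only [gm] <;> linarith)]
  have hp : p α 2 (gm α 2 x) = u α (-(gm α 2 x)) := by
    dsimp only [p, gm]
    rw [if_neg (by linarith), if_neg (by linarith), if_pos (by linarith)]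
  rw [hp]; simp only [gm]
  have hu := u_neg_mul_sin (a := α) (x := x + 2*α) hca.ne' ⟨by linarith, by linarith⟩
  have : u α (-(x + 2*α)) * (1/2 * Real.sin (x + 2*α))
      = 1/2 * (u α (-(x + 2*α)) * Real.sin (x + 2*α)) := by ring
  rw [this, hu, show x + 2*α - α = x + α by ring]
  field_simp [hca.ne']
  ring

lemma q2_one (ha0 : 0 < α) (ha6 : 6*α < π) (h1 : π - 3*α < x) (h2 : x < π - 2*α) :
    q α 2 x = 1/2 * Real.sin (x + 2*α) := by
  have hπ := Real.pi_pos
  rw [q_of_mem (by constructor <;> (show _ ≤ _) <;> simp only [gm] <;> linarith)]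
  have hp : p α 2 (gm α 2 x) = 1 := by
    dsimp only [p, gm]
    rw [if_neg (by linarith), if_neg (by linarith), if_neg (by linarith)]
  rw [hp]; simp [gm]

lemma q2_notmem (ha0 : 0 < α) (h : π - 2*α < x) : q α 2 x = 0 := by
  apply q_of_not_mem
  intro hm
  have h1 : x + 2*α ≤ π := hm.2
  linarith

lemma q3_zero_lt (ha0 : 0 < α) (ha6 : 6*α < π) (h : x < α) : q α 3 x = 0 := by
  apply q_of_p_zero
  dsimp only [p, gm]
  rw [if_neg (by linarith), if_neg (by linarith), if_neg (by linarith)]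

lemma q3_zero_gt (ha0 : 0 < α) (ha6 : 6*α < π) (h : 3*α < x) : q α 3 x = 0 := by
  apply q_of_p_zero
  dsimp only [p, gm]
  rw [if_pos (by linarith)]

lemma q3_mid (ha0 : 0 < α) (ha6 : 6*α < π) (h1 : α < x) (h2 : x < 2*α) :
    q α 3 x = Real.sin (x - α) / (4 * Real.cos α) := by
  have hπ := Real.pi_pos
  have hca := cos_alpha_pos ha0 ha6
  have hc2 := cos_two_alpha_pos ha0 ha6
  rw [q_of_mem (by constructor <;> (show _ ≤ _) <;> simp only [gm] <;> linarith)]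
  have hp : p α 3 (gm α 3 x)
      = u α (-(gm α 3 x)) - 2 * Real.cos (2*α) * u (2*α) (-(gm α 3 x)) := by
    dsimp only [p, gm]
    rw [if_neg (by linarith), if_neg (by linarith), if_pos (by linarith)]
  rw [hp]; simp only [gm]
  have hIoo : (4*α - x) ∈ Set.Ioo 0 π := ⟨by linarith, by linarith⟩
  have hu1 := u_neg_mul_sin (a := α) (x := 4*α - x) hca.ne' hIoo
  have hu2 := u_neg_mul_sin (a := 2*α) (x := 4*α - x) hc2.ne' hIoo
  have : (u α (-(4*α - x)) - 2 * Real.cos (2*α) * u (2*α) (-(4*α - x)))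
        * (1/2 * Real.sin (4*α - x))
      = 1/2 * (u α (-(4*α - x)) * Real.sin (4*α - x))
        - Real.cos (2*α) * (u (2*α) (-(4*α - x)) * Real.sin (4*α - x)) := by ring
  rw [this, hu1, hu2, show 4*α - x - α = 3*α - x by ring, show 4*α - x - 2*α = 2*α - x by ring]
  have key : Real.sin (3*α - x) - 2 * Real.cos α * Real.sin (2*α - x) = Real.sin (x - α) := by
    simp only [show (3:ℝ)*α - x = (2*α - x) + α by ring, Real.sin_add, Real.cos_add,
      Real.sin_sub, Real.cos_sub, Real.sin_two_mul, Real.cos_two_mul']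
    linear_combination (Real.sin x * Real.cos α - Real.cos x * Real.sin α) * (Real.sin_sq_add_cos_sq α)
  calc 1/2 * (Real.sin (3*α - x) / (2 * Real.cos α)) - Real.cos (2*α) * (Real.sin (2*α - x) / (2 * Real.cos (2*α)))
      = (Real.sin (3*α - x) - 2 * Real.cos α * Real.sin (2*α - x)) / (4 * Real.cos α) := by
        field_simp [hca.ne', hc2.ne']; ring
    _ = Real.sin (x - α) / (4 * Real.cos α) := by rw [key]

lemma q3_u (ha0 : 0 < α) (ha6 : 6*α < π) (h1 : 2*α < x) (h2 : x < 3*α) :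
    q α 3 x = Real.sin (3*α - x) / (4 * Real.cos α) := by
  have hπ := Real.pi_pos
  have hca := cos_alpha_pos ha0 ha6
  rw [q_of_mem (by constructor <;> (show _ ≤ _) <;> simp only [gm] <;> linarith)]
  have hp : p α 3 (gm α 3 x) = u α (-(gm α 3 x)) := by
    dsimp only [p, gm]
    rw [if_neg (by linarith), if_pos (by linarith)]
  rw [hp]; simp only [gm]
  have hu := u_neg_mul_sin (a := α) (x := 4*α - x) hca.ne' ⟨by linarith, by linarith⟩
  have : u α (-(4*α - x)) * (1/2 * Real.sin (4*α - x))
      = 1/2 * (u α (-(4*α - x)) * Real.sin (4*α - x)) := by ring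
  rw [this, hu, show 4*α - x - α = 3*α - x by ring]
  field_simp [hca.ne']
  ring

end qvals


lemma q_nonneg_and_sum {α x : ℝ} (hα : α ∈ Set.Ioo 0 (π/6)) (hx : x ∈ Set.Ioo 0 π)
    (e1 : x ≠ α) (e2 : x ≠ 2*α) (e3 : x ≠ 3*α) (e4 : x ≠ π - 3*α) (e5 : x ≠ π - 2*α)
    (e6 : x ≠ π - α) :
    (0 ≤ q α 0 x ∧ 0 ≤ q α 1 x ∧ 0 ≤ q α 2 x ∧ 0 ≤ q α 3 x) ∧
      q α 0 x + q α 1 x + q α 2 x + q α 3 x = 1/2 * Real.sin x := by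
  obtain ⟨ha0, hα6⟩ := hα
  have hπ := Real.pi_pos
  have ha6 : 6*α < π := by linarith
  obtain ⟨hx0, hxπ⟩ := hx
  have hca := cos_alpha_pos ha0 ha6
  have hca4 : (0:ℝ) ≤ 4 * Real.cos α := by linarith
  have snn : ∀ y : ℝ, 0 ≤ y → y ≤ π → 0 ≤ Real.sin y := fun y a b =>
    Real.sin_nonneg_of_nonneg_of_le_pi a b
  have keyI : Real.sin (x+α) + Real.sin (x-α) = 2*Real.cos α * Real.sin x := by
    rw [Real.sin_add, Real.sin_sub]; ring
  rcases e1.lt_or_gt with r1 | r1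
  · -- region (0, α)
    have v0 := q0_notmem (x := x) ha0 (by linarith : x < 2*α)
    have v1 := q1_zero_lt (x := x) ha0 ha6 (by linarith)
    have v2 := q2_c2 (x := x) ha0 ha6 hx0 r1
    have v3 := q3_zero_lt (x := x) ha0 ha6 r1
    exact ⟨⟨by simp [v0], by simp [v1], by rw [v2]; have := snn x hx0.le hxπ.le; linarith,
      by simp [v3]⟩, by rw [v0, v1, v2, v3]; ring⟩
  rcases e2.lt_or_gt with r2 | r2
  · -- region (α, 2α)
    have v0 := q0_notmem (x := x) ha0 r2
    have v1 := q1_zero_lt (x := x) ha0 ha6 (by linarith)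
    have v2 := q2_u (x := x) ha0 ha6 r1 (by linarith)
    have v3 := q3_mid (x := x) ha0 ha6 r1 r2
    have key : Real.sin (x+α) + Real.sin (x-α) = 2*Real.cos α * Real.sin x := keyI
    refine ⟨⟨by simp [v0], by simp [v1],
      by rw [v2]; exact div_nonneg (snn _ (by linarith) (by linarith)) hca4,
      by rw [v3]; exact div_nonneg (snn _ (by linarith) (by linarith)) hca4⟩, ?_⟩
    rw [v0, v1, v2, v3]
    field_simp [hca.ne']
    linear_combination 2*key
  rcases e3.lt_or_gt with r3 | r3
  · -- region (2α, 3α)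
    have v0 := q0_one (x := x) ha0 ha6 r2 r3
    have v1 := q1_zero_lt (x := x) ha0 ha6 (by linarith)
    have v2 := q2_u (x := x) ha0 ha6 (by linarith) (by linarith)
    have v3 := q3_u (x := x) ha0 ha6 r2 r3
    have key : Real.sin (x+α) + Real.sin (3*α - x) + 2*Real.cos α * Real.sin (x - 2*α)
        = 2*Real.cos α * Real.sin x := by
      simp only [show (3:ℝ)*α - x = (2*α - x) + α by ring, Real.sin_add, Real.cos_add,
        Real.sin_sub, Real.cos_sub, Real.sin_two_mul, Real.cos_two_mul']
      linear_combination (Real.sin x * Real.cos α - Real.cos x * Real.sin α) *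
        Real.sin_sq_add_cos_sq α
    refine ⟨⟨by rw [v0]; have := snn (x - 2*α) (by linarith) (by linarith); linarith,
      by simp [v1],
      by rw [v2]; exact div_nonneg (snn _ (by linarith) (by linarith)) hca4,
      by rw [v3]; exact div_nonneg (snn _ (by linarith) (by linarith)) hca4⟩, ?_⟩
    rw [v0, v1, v2, v3]
    field_simp [hca.ne']
    linear_combination (norm := ring_nf) 2 * key
  rcases e4.lt_or_gt with r4 | r4
  · -- region (3α, π - 3α)
    have v0 := q0_u (x := x) ha0 ha6 r3 (by linarith)
    have v1 := q1_zero_lt (x := x) ha0 ha6 r4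
    have v2 := q2_u (x := x) ha0 ha6 (by linarith) r4
    have v3 := q3_zero_gt (x := x) ha0 ha6 r3
    refine ⟨⟨by rw [v0]; exact div_nonneg (snn _ (by linarith) (by linarith)) hca4,
      by simp [v1],
      by rw [v2]; exact div_nonneg (snn _ (by linarith) (by linarith)) hca4,
      by simp [v3]⟩, ?_⟩
    rw [v0, v1, v2, v3]
    field_simp [hca.ne']
    linear_combination 2*keyI
  rcases e5.lt_or_gt with r5 | r5
  · -- region (π - 3α, π - 2α)
    have v0 := q0_u (x := x) ha0 ha6 (by linarith) (by linarith)
    have v1 := q1_u (x := x) ha0 ha6 r4 r5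
    have v2 := q2_one (x := x) ha0 ha6 r4 r5
    have v3 := q3_zero_gt (x := x) ha0 ha6 (by linarith)
    have hs3 : Real.sin (x + 3*α) ≤ 0 := by
      rw [show x + 3*α = (x + 3*α - π) + π by ring, Real.sin_add_pi]
      have := snn (x + 3*α - π) (by linarith) (by linarith)
      linarith
    have key : Real.sin (x-α) - Real.sin (x+3*α) + 2*Real.cos α * Real.sin (x+2*α)
        = 2*Real.cos α * Real.sin x := by
      simp only [show x + 3*α = (x + 2*α) + α by ring, Real.sin_add, Real.cos_add,
        Real.sin_sub, Real.cos_sub, Real.sin_two_mul, Real.cos_two_mul']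
      linear_combination (Real.sin x * Real.cos α + Real.cos x * Real.sin α) *
        Real.sin_sq_add_cos_sq α
    refine ⟨⟨by rw [v0]; exact div_nonneg (snn _ (by linarith) (by linarith)) hca4,
      by rw [v1]; exact div_nonneg (by linarith) hca4,
      by rw [v2]; have := snn (x + 2*α) (by linarith) (by linarith); linarith,
      by simp [v3]⟩, ?_⟩
    rw [v0, v1, v2, v3]
    field_simp [hca.ne']
    linear_combination (norm := ring_nf) 2*key
  rcases e6.lt_or_gt with r6 | r6
  · -- region (π - 2α, π - α)
    have v0 := q0_u (x := x) ha0 ha6 (by linarith) r6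
    have v1 := q1_mid (x := x) ha0 ha6 r5 r6
    have v2 := q2_notmem (x := x) ha0 r5
    have v3 := q3_zero_gt (x := x) ha0 ha6 (by linarith)
    refine ⟨⟨by rw [v0]; exact div_nonneg (snn _ (by linarith) (by linarith)) hca4,
      by rw [v1]; exact div_nonneg (snn _ (by linarith) (by linarith)) hca4,
      by simp [v2], by simp [v3]⟩, ?_⟩
    rw [v0, v1, v2, v3]
    field_simp [hca.ne']
    linear_combination 2*keyI
  · -- region (π - α, π)
    have v0 := q0_c2 (x := x) ha0 ha6 r6 hxπ
    have v1 := q1_zero_gt (x := x) ha0 ha6 r6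
    have v2 := q2_notmem (x := x) ha0 (by linarith)
    have v3 := q3_zero_gt (x := x) ha0 ha6 (by linarith)
    exact ⟨⟨by rw [v0]; have := snn x hx0.le hxπ.le; linarith, by simp [v1], by simp [v2],
      by simp [v3]⟩, by rw [v0, v1, v2, v3]; ring⟩

/-! ### Measurability -/

lemma measurable_tan' : Measurable Real.tan := by
  have h : (fun x => Real.sin x / Real.cos x) = Real.tan := by
    funext x; rw [Real.tan_eq_sin_div_cos]
  rw [← h]
  exact Real.continuous_sin.measurable.div Real.continuous_cos.measurable

lemma measurable_u' (a : ℝ) : Measurable (u a) := by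
  unfold u
  exact ((measurable_const.div measurable_tan').const_add 1).const_mul (1/2)

lemma measurable_p (α : ℝ) (i : Fin 4) : Measurable (p α i) := by
  have hu : ∀ a, Measurable (u a) := measurable_u'
  have hneg : ∀ a, Measurable (fun θ : ℝ => u a (-θ)) := fun a => (hu a).comp measurable_neg
  fin_cases i <;> simp only [p]
  · exact Measurable.ite measurableSet_Iio measurable_const
      (Measurable.ite measurableSet_Iio (hu α)
        (Measurable.ite measurableSet_Iio ((hu (2*α)).const_mul _) measurable_const))
  · exact Measurable.ite measurableSet_Iio measurable_const
      (Measurable.ite measurableSet_Iio ((hu α).sub ((hu (2*α)).const_mul _))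
        (Measurable.ite measurableSet_Iio (hu α) measurable_const))
  · exact Measurable.ite measurableSet_Iio measurable_const
      (Measurable.ite measurableSet_Iio ((hneg (2*α)).const_mul _)
        (Measurable.ite measurableSet_Iio (hneg α) measurable_const))
  · exact Measurable.ite measurableSet_Iio measurable_const
      (Measurable.ite measurableSet_Iio (hneg α)
        (Measurable.ite measurableSet_Iio ((hneg α).sub ((hneg (2*α)).const_mul _))
          measurable_const))

lemma measurable_gm (α : ℝ) (i : Fin 4) : Measurable (gm α i) := by
  fin_cases i <;> simp only [gm] <;> fun_prop

/-! ### Change of variables -/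

lemma lintegral_comp_neg' (F : ℝ → ℝ≥0∞) : ∫⁻ x, F (-x) = ∫⁻ x, F x := by
  have hm : Measure.map (⇑(MeasurableEquiv.neg ℝ)) (volume : Measure ℝ) = volume := by
    have h : ⇑(MeasurableEquiv.neg ℝ) = (Neg.neg : ℝ → ℝ) := rfl
    rw [h, Measure.map_neg_eq_self]
  calc ∫⁻ x, F (-x) = ∫⁻ x, F ((MeasurableEquiv.neg ℝ) x) := rfl
    _ = ∫⁻ y, F y ∂(Measure.map (MeasurableEquiv.neg ℝ) volume) :=
        (lintegral_map_equiv F (MeasurableEquiv.neg ℝ)).symm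
    _ = ∫⁻ y, F y := by rw [hm]

lemma lintegral_comp_gm (α : ℝ) (i : Fin 4) (F : ℝ → ℝ≥0∞) :
    ∫⁻ x, F (gm α i x) = ∫⁻ x, F x := by
  fin_cases i <;> simp only [gm]
  · exact lintegral_sub_right_eq_self F (2*α)
  · have h : ∀ x : ℝ, 2*π - 4*α - x = 2*π - 4*α + -x := fun x => by ring
    simp_rw [h]
    rw [lintegral_comp_neg' (fun y => F (2*π - 4*α + y))]
    exact lintegral_add_left_eq_self F (2*π - 4*α)
  · exact lintegral_add_right_eq_self F (2*α)
  · have h : ∀ x : ℝ, 4*α - x = 4*α + -x := fun x => by ring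
    simp_rw [h]
    rw [lintegral_comp_neg' (fun y => F (4*α + y))]
    exact lintegral_add_left_eq_self F (4*α)

/-! ### The ENNReal-valued density identity -/

def Qe (α : ℝ) (i : Fin 4) (x : ℝ) : ℝ≥0∞ :=
  (Set.Icc 0 π).indicator (fun t => ENNReal.ofReal (p α i t * (1/2 * Real.sin t))) (gm α i x)

lemma Qe_eq (α : ℝ) (i : Fin 4) (x : ℝ) : Qe α i x = ENNReal.ofReal (q α i x) := by
  unfold Qe q
  by_cases h : gm α i x ∈ Set.Icc 0 π
  · rw [Set.indicator_of_mem h, Set.indicator_of_mem h]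
  · rw [Set.indicator_of_notMem h, Set.indicator_of_notMem h, ENNReal.ofReal_zero]

lemma measurable_Qe (α : ℝ) (i : Fin 4) : Measurable (Qe α i) := by
  have h1 : Measurable fun t => ENNReal.ofReal (p α i t * (1/2 * Real.sin t)) :=
    ((measurable_p α i).mul (Real.continuous_sin.measurable.const_mul _)).ennreal_ofReal
  exact (h1.indicator measurableSet_Icc).comp (measurable_gm α i)

lemma Qe_sum {α x : ℝ} (hα : α ∈ Set.Ioo 0 (π/6)) (hx : x ∈ Set.Ioo 0 π)
    (e1 : x ≠ α) (e2 : x ≠ 2*α) (e3 : x ≠ 3*α) (e4 : x ≠ π - 3*α) (e5 : x ≠ π - 2*α)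
    (e6 : x ≠ π - α) :
    ∑ i : Fin 4, Qe α i x = ENNReal.ofReal (1/2 * Real.sin x) := by
  obtain ⟨⟨n0, n1, n2, n3⟩, hsum⟩ := q_nonneg_and_sum hα hx e1 e2 e3 e4 e5 e6
  rw [Fin.sum_univ_four, Qe_eq, Qe_eq, Qe_eq, Qe_eq,
    ← ENNReal.ofReal_add n0 n1, ← ENNReal.ofReal_add (add_nonneg n0 n1) n2,
    ← ENNReal.ofReal_add (add_nonneg (add_nonneg n0 n1) n2) n3, hsum]

/-! ### Invariance of `mu0` -/

lemma step_invariant {α : ℝ} (hα : α ∈ Set.Ioo 0 (π/6)) (f : ℝ → ℝ≥0∞) (hf : Measurable f)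
    (hsupp : ∀ y, y ∉ Set.Icc 0 π → f y = 0) :
    ∑ i : Fin 4, ∫⁻ θ, f (T α i θ) * ENNReal.ofReal (p α i θ) ∂mu0 = ∫⁻ y, f y ∂mu0 := by
  have hw : Measurable fun θ : ℝ => ENNReal.ofReal (1/2 * Real.sin θ) :=
    (Real.continuous_sin.measurable.const_mul _).ennreal_ofReal
  have hTm : ∀ i : Fin 4, Measurable (T α i) := by
    intro i; fin_cases i <;> simp only [T] <;> fun_prop
  have key : ∀ i : Fin 4, ∫⁻ θ, f (T α i θ) * ENNReal.ofReal (p α i θ) ∂mu0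
      = ∫⁻ x, f x * Qe α i x := by
    intro i
    have hg : Measurable fun θ => f (T α i θ) * ENNReal.ofReal (p α i θ) :=
      (hf.comp (hTm i)).mul ((measurable_p α i).ennreal_ofReal)
    rw [mu0, lintegral_withDensity_eq_lintegral_mul _ hw hg,
      ← lintegral_indicator measurableSet_Icc,
      ← lintegral_comp_gm α i]
    apply lintegral_congr
    intro x
    by_cases h : gm α i x ∈ Set.Icc 0 π
    · rw [Set.indicator_of_mem h]
      unfold Qe
      rw [Set.indicator_of_mem h]
      simp only [Pi.mul_apply]
      rw [T_gm]
      rw [ENNReal.ofReal_mul' (mul_nonneg (by norm_num)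
        (Real.sin_nonneg_of_nonneg_of_le_pi h.1 h.2))]
      ring
    · rw [Set.indicator_of_notMem h]
      unfold Qe
      rw [Set.indicator_of_notMem h, mul_zero]
  calc ∑ i : Fin 4, ∫⁻ θ, f (T α i θ) * ENNReal.ofReal (p α i θ) ∂mu0
      = ∑ i : Fin 4, ∫⁻ x, f x * Qe α i x := Finset.sum_congr rfl fun i _ => key i
    _ = ∫⁻ x, ∑ i : Fin 4, f x * Qe α i x :=
        (lintegral_finset_sum _ fun i _ => hf.mul (measurable_Qe α i)).symm
    _ = ∫⁻ x, f x * ∑ i : Fin 4, Qe α i x :=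
        lintegral_congr fun x => (Finset.mul_sum _ _ _).symm
    _ = ∫⁻ x, f x * (Set.Icc 0 π).indicator (fun t => ENNReal.ofReal (1/2 * Real.sin t)) x := by
        apply lintegral_congr_ae
        have hbad : (volume : Measure ℝ)
            ({0, π, α, 2*α, 3*α, π - 3*α, π - 2*α, π - α} : Set ℝ) = 0 :=
          (Set.toFinite _).countable.measure_zero volume
        filter_upwards [measure_eq_zero_iff_ae_notMem.mp hbad] with x hxS
        simp only [Set.mem_insert_iff, Set.mem_singleton_iff, not_or] at hxS
        obtain ⟨u0, uπ, u1, u2, u3, u4, u5, u6⟩ := hxS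
        by_cases hic : x ∈ Set.Icc 0 π
        · have hxI : x ∈ Set.Ioo 0 π :=
            ⟨lt_of_le_of_ne hic.1 (Ne.symm u0), lt_of_le_of_ne hic.2 uπ⟩
          rw [Qe_sum hα hxI u1 u2 u3 u4 u5 u6, Set.indicator_of_mem hic]
        · rw [hsupp x hic, zero_mul, zero_mul]
    _ = ∫⁻ x, (Set.Icc 0 π).indicator
          (fun t => ENNReal.ofReal (1/2 * Real.sin t) * f t) x := by
        apply lintegral_congr
        intro x
        by_cases hic : x ∈ Set.Icc 0 π
        · rw [Set.indicator_of_mem hic, Set.indicator_of_mem hic, mul_comm]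
        · rw [Set.indicator_of_notMem hic, Set.indicator_of_notMem hic, mul_zero]
    _ = ∫⁻ y, f y ∂mu0 := by
        rw [lintegral_indicator measurableSet_Icc, mu0,
          lintegral_withDensity_eq_lintegral_mul _ hw hf]
        rfl

end RandomBilliard

instance : SFinite mu0 := by unfold mu0; infer_instance

/-- the measure `λ × μ` (normalized Lebesgue on `[0, L]` times
`μ(B) = (1/2)∫_B sin θ dθ`) is invariant for the random map `T̄(s, θ) = (s, T_i(θ))`
with probability `p_i(θ)`. -/
theorem prod_measure_invariant_for_Tbar (α : ℝ) (hα : α ∈ Set.Ioo 0 (π / 6))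
    (L : ℝ) (hL : 0 < L) (lam : Measure ℝ)
    (hlam : lam = (ENNReal.ofReal L)⁻¹ • volume.restrict (Set.Icc 0 L))
    (E : Set (ℝ × ℝ)) (hE : MeasurableSet E)
    (hEsub : E ⊆ Set.Icc 0 L ×ˢ Set.Icc 0 π) :
    (lam.prod mu0) E =
      ∑ i : Fin 4, ∫⁻ θ, (∫⁻ s,
        Set.indicator E (fun _ => (1 : ℝ≥0∞)) (s, T α i θ) * ENNReal.ofReal (p α i θ)
          ∂lam) ∂mu0 := by
  subst hlam
  set ν : Measure ℝ := volume.restrict (Set.Icc 0 L) with hν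
  set c : ℝ≥0∞ := (ENNReal.ofReal L)⁻¹ with hc
  have hslice : ∀ y : ℝ, MeasurableSet ((fun s => (s, y)) ⁻¹' E) :=
    fun y => hE.preimage (measurable_id.prodMk measurable_const)
  set f : ℝ → ℝ≥0∞ := fun y => c * ν ((fun s => (s, y)) ⁻¹' E) with hfdef
  have hf : Measurable f := (measurable_measure_prodMk_right hE).const_mul c
  have hsupp : ∀ y, y ∉ Set.Icc 0 π → f y = 0 := by
    intro y hy
    have hempty : ((fun s => (s, y)) ⁻¹' E) = ∅ := by
      ext s
      simp only [Set.mem_preimage, Set.mem_empty_iff_false, iff_false]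
      intro hm
      exact hy (hEsub hm).2
    show c * ν ((fun s => (s, y)) ⁻¹' E) = 0
    rw [hempty, measure_empty, mul_zero]
  have hRHS : ∀ (i : Fin 4) (θ : ℝ),
      (∫⁻ s, Set.indicator E (fun _ => (1:ℝ≥0∞)) (s, T α i θ) * ENNReal.ofReal (p α i θ)
        ∂(c • ν)) = f (T α i θ) * ENNReal.ofReal (p α i θ) := by
    intro i θ
    rw [lintegral_mul_const' _ _ ENNReal.ofReal_ne_top, lintegral_smul_measure]
    congr 1
    have hind : ∀ s : ℝ, Set.indicator E (fun _ => (1:ℝ≥0∞)) (s, T α i θ)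
        = Set.indicator ((fun s' => (s', T α i θ)) ⁻¹' E) (fun _ => (1:ℝ≥0∞)) s := by
      intro s
      by_cases hm : (s, T α i θ) ∈ E
      · rw [Set.indicator_of_mem hm, Set.indicator_of_mem (by exact hm)]
      · rw [Set.indicator_of_notMem hm, Set.indicator_of_notMem (by exact hm)]
    rw [lintegral_congr hind]
    show c * ∫⁻ a, ((fun s' => (s', T α i θ)) ⁻¹' E).indicator 1 a ∂ν = f (T α i θ)
    rw [lintegral_indicator_one (hslice _)]
  rw [Measure.prod_apply_symm hE]
  have hL1 : ∫⁻ y, ((c • ν) ((fun x => (x, y)) ⁻¹' E)) ∂mu0 = ∫⁻ y, f y ∂mu0 :=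
    lintegral_congr fun y => by rw [Measure.smul_apply, smul_eq_mul]
  rw [hL1, ← step_invariant hα f hf hsupp]
  exact Finset.sum_congr rfl fun i _ => (lintegral_congr fun θ => hRHS i θ).symm
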